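/- Let (S, ≺) be a finite poset with an order-preserving injection h : S → [1, n_m] such that for every s ∈ S, the image h(S_{⪰s}) is an interval [a(s), b(s)] ⊂ [1, n_m], and h^{-1}(n_m) ≠ ∅. Then there exists a weakly increasing sequence n̄ = (n_1 ≤ ... ≤ n_m) and an order isomorphism ψ : S → Sc_{n̄} onto the poset of staircase corners of Y_{n̄} such that h = hor ∘ ψ. -/

import Mathlib

/-- The rows used by the staircase corners in the first `j` columns of the staircase
diagram with column heights `n`: processing columns left to right, column `j+1`
receives the corner in the highest-index free row `≤ n (j+1)`, if any. -/
def usedRows (n : ℕ → ℕ) : ℕ → Finset ℕ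
  | 0 => ∅
  | j + 1 => usedRows n j ∪
      WithBot.recBotCoe ∅ (fun i => {i})
        ((Finset.Icc 1 (n (j + 1)) \ usedRows n j).max)

/-- The set of staircase corners of the staircase Young diagram with `m` columns of
heights `n 1 ≤ … ≤ n m`: the cell `(i, j)` is a staircase corner iff `1 ≤ j ≤ m` and
`i` is the largest row `≤ n j` not used by a corner of an earlier column. -/
def staircaseCorners (m : ℕ) (n : ℕ → ℕ) : Set (ℕ × ℕ) :=
  {p | 1 ≤ p.2 ∧ p.2 ≤ m ∧
    (Finset.Icc 1 (n p.2) \ usedRows n (p.2 - 1)).max = (p.1 : WithBot ℕ)}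

/-- Realization theorem: if `(S, ≺)` is a finite poset with a monotone injection
`h : S → [1, N]` such that every up-set `S_{⪰s}` maps onto an interval of `[1, N]`
and `N` is attained, then there is a weakly increasing positive sequence
`n 1 ≤ … ≤ n m` and an order isomorphism `ψ` from `S` onto the poset of staircase
corners of `Y_{n̄}` (ordered by `(i,j) ⪰ (i',j') ↔ i ≥ i' ∧ j ≤ j'`) with
`h = hor ∘ ψ`, i.e. `h s` is the row index of `ψ s`. -/
theorem stmt_19 {S : Type*} [PartialOrder S] [Finite S] (N : ℕ) (h : S → ℕ)
    (hmono : Monotone h) (hinj : Function.Injective h)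
    (hrange : ∀ s : S, 1 ≤ h s ∧ h s ≤ N)
    (hint : ∀ s : S, ∃ a b : ℕ, h '' {t : S | s ≤ t} = Set.Icc a b)
    (htop : ∃ s : S, h s = N) :
    ∃ (m : ℕ) (n : ℕ → ℕ),
      (∀ j : ℕ, 1 ≤ j → j ≤ m → 1 ≤ n j) ∧
      (∀ j : ℕ, 1 ≤ j → j + 1 ≤ m → n j ≤ n (j + 1)) ∧
      ∃ ψ : S → ℕ × ℕ,
        Set.BijOn ψ Set.univ (staircaseCorners m n) ∧
        (∀ s t : S, s ≤ t ↔ ((ψ s).1 ≤ (ψ t).1 ∧ (ψ t).2 ≤ (ψ s).2)) ∧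
        (∀ s : S, h s = (ψ s).1) := by
  classical
  have : Fintype S := Fintype.ofFinite S
  obtain ⟨s₀, -⟩ := htop
  -- strict monotonicity
  have hlt : ∀ {s t : S}, s < t → h s < h t := fun {s t} hst =>
    (hmono hst.le).lt_of_ne (fun e => hst.ne (hinj e))
  -- interval property
  have hmid : ∀ s t : S, s ≤ t → ∀ v : ℕ, h s ≤ v → v ≤ h t → ∃ u, s ≤ u ∧ h u = v := by
    intro s t hst v hv1 hv2
    obtain ⟨a, b, hab⟩ := hint s
    have hs : h s ∈ Set.Icc a b := hab ▸ ⟨s, le_refl s, rfl⟩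
    have ht : h t ∈ Set.Icc a b := hab ▸ ⟨t, hst, rfl⟩
    have : v ∈ h '' {u : S | s ≤ u} := by
      rw [hab]; exact ⟨hs.1.trans hv1, hv2.trans ht.2⟩
    obtain ⟨u, hu, he⟩ := this
    exact ⟨u, hu, he⟩
  -- the column order
  set r : S → S → Prop := fun s t => t < s ∨ (¬ s ≤ t ∧ ¬ t ≤ s ∧ h s < h t) with hr
  have rirrefl : ∀ s, ¬ r s s := by
    intro s hs
    rcases hs with hs | ⟨hs, -, -⟩
    · exact lt_irrefl _ hs
    · exact hs le_rfl
  have rtri : ∀ s t : S, s = t ∨ r s t ∨ r t s := by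
    intro s t
    by_cases hst : s ≤ t
    · rcases eq_or_lt_of_le hst with he | hl
      · exact Or.inl he
      · exact Or.inr (Or.inr (Or.inl hl))
    by_cases hts : t ≤ s
    · exact Or.inr (Or.inl (Or.inl (lt_of_le_of_ne hts (fun e => hst e.symm.le))))
    have hne : h s ≠ h t := fun e => hst ((hinj e) ▸ le_rfl)
    rcases hne.lt_or_gt with hl | hl
    · exact Or.inr (Or.inl (Or.inr ⟨hst, hts, hl⟩))
    · exact Or.inr (Or.inr (Or.inr ⟨hts, hst, hl⟩))
  have rtrans : ∀ {s t u : S}, r s t → r t u → r s u := by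
    intro s t u h1 h2
    rcases h1 with h1 | ⟨hst, hts, h1⟩
    · rcases h2 with h2 | ⟨htu, hut, h2⟩
      · exact Or.inl (h2.trans h1)
      · -- t < s, t ∥ u, h t < h u
        by_cases hus : u ≤ s
        · rcases eq_or_lt_of_le hus with he | hl
          · exact absurd (by rw [he]; exact h1.le : t ≤ u) htu
          · exact Or.inl hl
        by_cases hsu : s ≤ u
        · exact absurd (h1.le.trans hsu) htu
        refine Or.inr ⟨hsu, hus, ?_⟩
        by_contra hc
        have hne : h u ≠ h s := fun e => hus ((hinj e) ▸ le_rfl)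
        have hus' : h u < h s := lt_of_le_of_ne (not_lt.mp hc) hne
        obtain ⟨w, hw, hwe⟩ := hmid t s h1.le (h u) h2.le hus'.le
        exact htu (hinj hwe ▸ hw)
    · rcases h2 with h2 | ⟨htu, hut, h2⟩
      · -- s ∥ t, h s < h t, u < t
        by_cases hus : u ≤ s
        · rcases eq_or_lt_of_le hus with he | hl
          · exact absurd (he ▸ h2) (fun e => hst e.le)
          · exact Or.inl hl
        by_cases hsu : s ≤ u
        · exact absurd (hsu.trans h2.le) hst
        refine Or.inr ⟨hsu, hus, ?_⟩
        by_contra hc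
        have hne : h u ≠ h s := fun e => hus ((hinj e) ▸ le_rfl)
        have hus' : h u < h s := lt_of_le_of_ne (not_lt.mp hc) hne
        obtain ⟨w, hw, hwe⟩ := hmid u t h2.le (h s) hus'.le h1.le
        exact hus (hinj hwe ▸ hw)
      · -- s ∥ t, t ∥ u, h s < h t < h u
        by_cases hus : u ≤ s
        · exact absurd (hmono hus) (not_le.mpr (h1.trans h2))
        by_cases hsu : s ≤ u
        · obtain ⟨w, hw, hwe⟩ := hmid s u hsu (h t) h1.le h2.le
          exact absurd (hinj hwe ▸ hw) hst
        exact Or.inr ⟨hsu, hus, h1.trans h2⟩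
  -- rank function
  set col : S → ℕ := fun s => (Finset.univ.filter (fun t => r t s)).card + 1 with hcol
  have hcol_pos : ∀ s, 1 ≤ col s := fun s => Nat.le_add_left 1 _
  have hcol_lt : ∀ {s t : S}, r s t ↔ col s < col t := by
    intro s t
    constructor
    · intro hst
      have hss : (Finset.univ.filter (fun u => r u s)) ⊂ (Finset.univ.filter (fun u => r u t)) := by
        constructor
        · intro u hu
          simp only [Finset.mem_filter, Finset.mem_univ, true_and] at hu ⊢
          exact rtrans hu hst
        · intro hsub
          have : s ∈ Finset.univ.filter (fun u => r u t) := by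
            simp only [Finset.mem_filter, Finset.mem_univ, true_and]; exact hst
          have := hsub this
          simp only [Finset.mem_filter, Finset.mem_univ, true_and] at this
          exact rirrefl s this
      simpa [hcol] using Finset.card_lt_card hss
    · intro hc
      rcases rtri s t with he | hst | hts
      · exact absurd hc (by simp [he])
      · exact hst
      · have hss : (Finset.univ.filter (fun u => r u t)) ⊂ (Finset.univ.filter (fun u => r u s)) := by
          constructor
          · intro u hu
            simp only [Finset.mem_filter, Finset.mem_univ, true_and] at hu ⊢
            exact rtrans hu hts
          · intro hsub
            have : t ∈ Finset.univ.filter (fun u => r u s) := by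
              simp only [Finset.mem_filter, Finset.mem_univ, true_and]; exact hts
            have := hsub this
            simp only [Finset.mem_filter, Finset.mem_univ, true_and] at this
            exact rirrefl t this
        have := Finset.card_lt_card hss
        simp only [hcol] at hc
        omega
  have hcol_inj : Function.Injective col := by
    intro s t he
    rcases rtri s t with h' | h' | h'
    · exact h'
    · exact absurd (hcol_lt.mp h') (by omega)
    · exact absurd (hcol_lt.mp h') (by omega)
  set m : ℕ := Fintype.card S with hm
  have hm1 : 1 ≤ m := Fintype.card_pos_iff.mpr ⟨s₀⟩
  have hcol_le : ∀ s, col s ≤ m := by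
    intro s
    have : (Finset.univ.filter (fun t => r t s)) ⊆ Finset.univ.erase s := by
      intro u hu
      simp only [Finset.mem_filter, Finset.mem_univ, true_and] at hu
      exact Finset.mem_erase.mpr ⟨fun e => rirrefl s (e ▸ hu), Finset.mem_univ u⟩
    have h2 := Finset.card_le_card this
    rw [Finset.card_erase_of_mem (Finset.mem_univ s)] at h2
    simp only [hcol]
    have : Finset.univ.card = m := rfl
    omega
  -- surjectivity onto [1, m]
  have hcol_surj : ∀ j : ℕ, 1 ≤ j → j ≤ m → ∃ s : S, col s = j := by
    intro j hj1 hjm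
    have himg : Finset.univ.image col = Finset.Icc 1 m := by
      apply Finset.eq_of_subset_of_card_le
      · intro x hx
        simp only [Finset.mem_image] at hx
        obtain ⟨s, -, rfl⟩ := hx
        exact Finset.mem_Icc.mpr ⟨hcol_pos s, hcol_le s⟩
      · rw [Finset.card_image_of_injective _ hcol_inj]
        simp [Nat.card_Icc]
        exact hm.le
    have : j ∈ Finset.univ.image col := by
      rw [himg]; exact Finset.mem_Icc.mpr ⟨hj1, hjm⟩
    simp only [Finset.mem_image] at this
    obtain ⟨s, -, hs⟩ := this
    exact ⟨s, hs⟩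
  -- choose representative for each column
  have hσ' : ∀ j : ℕ, ∃ s : S, 1 ≤ j → j ≤ m → col s = j := by
    intro j
    by_cases hj : 1 ≤ j ∧ j ≤ m
    · obtain ⟨s, hs⟩ := hcol_surj j hj.1 hj.2
      exact ⟨s, fun _ _ => hs⟩
    · exact ⟨s₀, fun h1 h2 => absurd ⟨h1, h2⟩ hj⟩
  choose σ hσ using hσ'
  set n : ℕ → ℕ := fun j => (Finset.univ.filter fun s : S => col s ≤ j).sup h with hn
  have hmax : ∀ j : ℕ, 1 ≤ j → j ≤ m →
      (Finset.Icc 1 (n j) \ (Finset.univ.filter fun s : S => col s ≤ j - 1).image h).max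
        = (h (σ j) : WithBot ℕ) := by
    intro j hj1 hjm
    have hcolσ : col (σ j) = j := hσ j hj1 hjm
    have hmemT : h (σ j) ∈
        Finset.Icc 1 (n j) \ (Finset.univ.filter fun s : S => col s ≤ j - 1).image h := by
      rw [Finset.mem_sdiff]
      refine ⟨Finset.mem_Icc.mpr ⟨(hrange _).1, Finset.le_sup (by simp [hcolσ])⟩, ?_⟩
      intro hc
      simp only [Finset.mem_image, Finset.mem_filter, Finset.mem_univ, true_and] at hc
      obtain ⟨u, hu, he⟩ := hc
      rw [hinj he, hcolσ] at hu
      omega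
    apply le_antisymm
    · apply Finset.max_le
      intro v hv
      rw [Finset.mem_sdiff, Finset.mem_Icc] at hv
      obtain ⟨⟨hv1, hv2⟩, hv3⟩ := hv
      by_contra hc
      push_neg at hc
      have hgt : h (σ j) < v := WithBot.coe_lt_coe.mp hc
      have hne : (Finset.univ.filter fun s : S => col s ≤ j).Nonempty :=
        ⟨σ j, by simp [hcolσ]⟩
      obtain ⟨w, hw, hwe⟩ := Finset.exists_mem_eq_sup _ hne h
      simp only [Finset.mem_filter, Finset.mem_univ, true_and] at hw
      have hwgt : h (σ j) < h w := lt_of_lt_of_le hgt (hwe ▸ hv2)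
      have hwne : w ≠ σ j := fun e => absurd (e ▸ hwgt) (lt_irrefl _)
      have hcolw : col w < j := by
        rcases lt_or_eq_of_le hw with h' | h'
        · exact h'
        · exact absurd (hcol_inj (h'.trans hcolσ.symm)) hwne
      have hrw : r w (σ j) := hcol_lt.mpr (by omega)
      have hlt' : σ j < w := by
        rcases hrw with h' | ⟨-, -, h'⟩
        · exact h'
        · exact absurd hwgt (not_lt.mpr h'.le)
      obtain ⟨u, hu, hue⟩ := hmid (σ j) w hlt'.le v hgt.le (hwe ▸ hv2)
      have hune : σ j ≠ u := fun e => by rw [← e] at hue; omega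
      have hru : r u (σ j) := Or.inl (lt_of_le_of_ne hu hune)
      have hcu : col u ≤ j - 1 := by
        have := hcol_lt.mp hru
        omega
      exact hv3 (Finset.mem_image.mpr
        ⟨u, Finset.mem_filter.mpr ⟨Finset.mem_univ u, hcu⟩, hue⟩)
    · exact Finset.le_max hmemT
  have hused : ∀ j : ℕ, j ≤ m →
      usedRows n j = (Finset.univ.filter fun s : S => col s ≤ j).image h := by
    intro j
    induction j with
    | zero =>
      intro _
      rw [usedRows]
      ext v
      simp only [Finset.notMem_empty, false_iff, Finset.mem_image, Finset.mem_filter,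
        Finset.mem_univ, true_and, not_exists, not_and]
      intro s hs
      have := hcol_pos s
      omega
    | succ k ih =>
      intro hk
      have hk' : k ≤ m := by omega
      rw [usedRows, ih hk']
      have hmx := hmax (k + 1) (by omega) hk
      simp only [Nat.add_sub_cancel] at hmx
      rw [hmx]
      have hrec : (WithBot.recBotCoe (C := fun _ => Finset ℕ) ∅ (fun i => {i})
          ((h (σ (k + 1)) : ℕ) : WithBot ℕ)) = {h (σ (k + 1))} := rfl
      rw [hrec]
      ext v
      simp only [Finset.mem_union, Finset.mem_image, Finset.mem_filter, Finset.mem_univ,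
        true_and, WithBot.recBotCoe_coe, Finset.mem_singleton]
      constructor
      · rintro (⟨u, hu, rfl⟩ | rfl)
        · exact ⟨u, by omega, rfl⟩
        · exact ⟨σ (k + 1), le_of_eq (hσ _ (by omega) hk), rfl⟩
      · rintro ⟨u, hu, rfl⟩
        rcases lt_or_eq_of_le hu with h' | h'
        · exact Or.inl ⟨u, by omega, rfl⟩
        · exact Or.inr (congrArg h (hcol_inj (h'.trans (hσ _ (by omega) hk).symm)))
  refine ⟨m, n, ?_, ?_, fun s => (h s, col s), ⟨?_, ?_, ?_⟩, ?_, fun s => rfl⟩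
  · intro j hj1 hjm
    exact le_trans (hrange (σ j)).1 (Finset.le_sup (by simp [hσ j hj1 hjm]))
  · intro j _ _
    apply Finset.sup_mono
    intro x hx
    simp only [Finset.mem_filter, Finset.mem_univ, true_and] at hx ⊢
    omega
  · -- MapsTo
    intro s _
    refine ⟨hcol_pos s, hcol_le s, ?_⟩
    have hσs : σ (col s) = s := hcol_inj (hσ _ (hcol_pos s) (hcol_le s))
    show (Finset.Icc 1 (n (col s)) \ usedRows n (col s - 1)).max = _
    rw [hused (col s - 1) (by have := hcol_le s; omega),
      hmax (col s) (hcol_pos s) (hcol_le s), hσs]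
  · -- InjOn
    intro s _ t _ he
    exact hcol_inj (congrArg Prod.snd he)
  · -- SurjOn
    intro p hp
    obtain ⟨hp1, hp2, hp3⟩ := hp
    rw [hused (p.2 - 1) (by omega), hmax p.2 hp1 hp2] at hp3
    have h1 : h (σ p.2) = p.1 := WithBot.coe_eq_coe.mp hp3
    have h2 : col (σ p.2) = p.2 := hσ _ hp1 hp2
    exact ⟨σ p.2, Set.mem_univ _, Prod.ext h1 h2⟩
  · -- order iff
    intro s t
    constructor
    · intro hst
      refine ⟨hmono hst, ?_⟩
      rcases eq_or_lt_of_le hst with rfl | hl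
      · exact le_rfl
      · exact (hcol_lt.mp (Or.inl hl)).le
    · rintro ⟨h1, h2⟩
      simp only at h1 h2
      by_cases he : s = t
      · exact he.le
      have hcl : col t < col s := lt_of_le_of_ne h2 (fun e => he (hcol_inj e).symm)
      rcases hcol_lt.mpr hcl with h' | ⟨-, -, h'⟩
      · exact h'.le
      · omega
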